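/- Suppose f ∈ C²(R^{1,q}_+) is harmonic for the signature-(1,q) Laplacian, homogeneous of degree ρ ∈ R, and its restriction to S^{1,q} depends only on the first coordinate, i.e., there is a C² function P on [1,∞) with f(x) = P(x₁) whenever x·x = 1 and x₁ > 0. Then P satisfies the differential equation (1−t²)P''(t) + (1−n)tP'(t) + ρ(ρ−2+n)P(t) = 0 for t > 1, where n = 1+q. -/

import Mathlib

open scoped BigOperators

noncomputable section

def eps (p : ℕ) {n : ℕ} (i : Fin n) : ℝ := if (i : ℕ) < p then 1 else -1

def qdot (p : ℕ) {n : ℕ} (x y : Fin n → ℝ) : ℝ := ∑ i, eps p i * x i * y i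

def lapR (p : ℕ) {n : ℕ} (f : (Fin n → ℝ) → ℝ) (x : Fin n → ℝ) : ℝ :=
  ∑ i, eps p i * fderiv ℝ (fun y => fderiv ℝ f y (Pi.single i 1)) x (Pi.single i 1)

namespace InvHODE

open ContinuousLinearMap Set

def Qf (q : ℕ) (y : Fin (q+1) → ℝ) : ℝ := ∑ i, eps 1 i * y i * y i

def DQ (q : ℕ) (y : Fin (q+1) → ℝ) : (Fin (q+1) → ℝ) →L[ℝ] ℝ :=
  ∑ i, (2 * eps 1 i * y i) • (ContinuousLinearMap.proj i : (Fin (q+1) → ℝ) →L[ℝ] ℝ)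

def Wf (q : ℕ) (y : Fin (q+1) → ℝ) : ℝ := y 0 * Qf q y ^ (-(1:ℝ)/2)

def DW (q : ℕ) (y : Fin (q+1) → ℝ) : (Fin (q+1) → ℝ) →L[ℝ] ℝ :=
  (Qf q y ^ (-(1:ℝ)/2)) • (ContinuousLinearMap.proj 0) +
    (y 0 * (-(1:ℝ)/2 * Qf q y ^ (-(1:ℝ)/2 - 1))) • DQ q y

def Ff (q : ℕ) (ρ : ℝ) (P : ℝ → ℝ) (y : Fin (q+1) → ℝ) : ℝ := Qf q y ^ (ρ/2) * P (Wf q y)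

def Af (q : ℕ) (ρ : ℝ) (P : ℝ → ℝ) (y : Fin (q+1) → ℝ) : ℝ :=
  Qf q y ^ (ρ/2) * deriv P (Wf q y) * Qf q y ^ (-(1:ℝ)/2)

def Bf (q : ℕ) (ρ : ℝ) (P : ℝ → ℝ) (y : Fin (q+1) → ℝ) : ℝ :=
  Qf q y ^ (ρ/2) * deriv P (Wf q y) * (y 0 * (-(1:ℝ)/2 * Qf q y ^ (-(1:ℝ)/2 - 1))) +
    P (Wf q y) * (ρ/2 * Qf q y ^ (ρ/2 - 1))

def DF (q : ℕ) (ρ : ℝ) (P : ℝ → ℝ) (y : Fin (q+1) → ℝ) : (Fin (q+1) → ℝ) →L[ℝ] ℝ :=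
  Af q ρ P y • (ContinuousLinearMap.proj 0) + Bf q ρ P y • DQ q y

variable {q : ℕ}

lemma DQ_apply (y v : Fin (q+1) → ℝ) : DQ q y v = ∑ i, 2 * eps 1 i * y i * v i := by
  simp [DQ, mul_assoc]

lemma DQ_single (y : Fin (q+1) → ℝ) (i : Fin (q+1)) :
    DQ q y (Pi.single i 1) = 2 * eps 1 i * y i := by
  rw [DQ_apply, Finset.sum_eq_single i]
  · simp
  · intro j _ hj
    simp [Pi.single_apply, hj]
  · simp

lemma DW_single (y : Fin (q+1) → ℝ) (i : Fin (q+1)) :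
    DW q y (Pi.single i 1) =
      Qf q y ^ (-(1:ℝ)/2) * (Pi.single i 1 : Fin (q+1) → ℝ) 0 +
        y 0 * (-(1:ℝ)/2 * Qf q y ^ (-(1:ℝ)/2 - 1)) * (2 * eps 1 i * y i) := by
  simp [DW, DQ_single]

lemma DF_single (ρ : ℝ) (P : ℝ → ℝ) (y : Fin (q+1) → ℝ) (i : Fin (q+1)) :
    DF q ρ P y (Pi.single i 1) =
      Af q ρ P y * (Pi.single i 1 : Fin (q+1) → ℝ) 0 + Bf q ρ P y * (2 * eps 1 i * y i) := by
  simp [DF, DQ_single]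

lemma hasFDerivAt_Qf (y : Fin (q+1) → ℝ) : HasFDerivAt (Qf q) (DQ q y) y := by
  have h : ∀ i : Fin (q+1), HasFDerivAt (fun z : Fin (q+1) → ℝ => eps 1 i * z i * z i)
      ((2 * eps 1 i * y i) • (ContinuousLinearMap.proj i : (Fin (q+1) → ℝ) →L[ℝ] ℝ)) y := by
    intro i
    have hp := (ContinuousLinearMap.proj (R := ℝ) (φ := fun _ : Fin (q+1) => ℝ) i).hasFDerivAt (x := y)
    refine ((hp.const_mul (eps 1 i)).mul hp).congr_fderiv ?_
    refine ContinuousLinearMap.ext fun v => ?_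
    simp
    ring
  exact HasFDerivAt.fun_sum fun i _ => h i

lemma hasFDerivAt_Wf (y : Fin (q+1) → ℝ) (hy : Qf q y ≠ 0) :
    HasFDerivAt (Wf q) (DW q y) y := by
  have hp0 := (ContinuousLinearMap.proj (R := ℝ) (φ := fun _ : Fin (q+1) => ℝ) 0).hasFDerivAt (x := y)
  have hr : HasDerivAt (fun s : ℝ => s ^ (-(1:ℝ)/2))
      ((-(1:ℝ)/2) * Qf q y ^ (-(1:ℝ)/2 - 1)) (Qf q y) :=
    Real.hasDerivAt_rpow_const (Or.inl hy)
  have hc := hr.comp_hasFDerivAt y (hasFDerivAt_Qf y)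
  refine (hp0.mul hc).congr_fderiv ?_
  refine ContinuousLinearMap.ext fun v => ?_
  simp [DW]
  ring

lemma hasFDerivAt_Ff (ρ : ℝ) (P : ℝ → ℝ) (y : Fin (q+1) → ℝ) (hy : Qf q y ≠ 0)
    (h1 : HasDerivAt P (deriv P (Wf q y)) (Wf q y)) :
    HasFDerivAt (Ff q ρ P) (DF q ρ P y) y := by
  have hr : HasDerivAt (fun s : ℝ => s ^ (ρ/2)) ((ρ/2) * Qf q y ^ (ρ/2 - 1)) (Qf q y) :=
    Real.hasDerivAt_rpow_const (Or.inl hy)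
  have hRQ := hr.comp_hasFDerivAt y (hasFDerivAt_Qf y)
  have hPW := h1.comp_hasFDerivAt y (hasFDerivAt_Wf y hy)
  refine (hRQ.mul hPW).congr_fderiv ?_
  refine ContinuousLinearMap.ext fun v => ?_
  simp [DF, Af, Bf, DW]
  ring

lemma continuous_Qf : Continuous (Qf q) := by
  unfold Qf
  exact continuous_finset_sum _ fun i _ =>
    (continuous_const.mul (continuous_apply i)).mul (continuous_apply i)

end InvHODE

open InvHODE in
/-- If `f` is harmonic for the signature-(1,q) Laplacian, homogeneous of degree `ρ`,
and its restriction to `S^{1,q}` is `P(x₁)`, then `P` satisfies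
`(1−t²)P'' + (1−n)tP' + ρ(ρ−2+n)P = 0` for `t > 1` (with `n = 1 + q`). -/
theorem invariant_harmonic_ode (q : ℕ) (hq : 1 ≤ q) (ρ : ℝ)
    (f : (Fin (q + 1) → ℝ) → ℝ) (P : ℝ → ℝ)
    (hsmooth : ∀ x, 0 < qdot 1 x x → ContDiffAt ℝ 2 f x)
    (hharm : ∀ x, 0 < qdot 1 x x → lapR 1 f x = 0)
    (hhom : ∀ x, 0 < qdot 1 x x → ∀ l : ℝ, 0 < l → f (l • x) = l ^ ρ * f x)
    (hP : ContDiffOn ℝ 2 P (Set.Ici 1))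
    (hPf : ∀ x : Fin (q + 1) → ℝ, qdot 1 x x = 1 → 0 < x 0 → f x = P (x 0)) :
    ∀ t : ℝ, 1 < t →
      (1 - t ^ 2) * deriv (deriv P) t + (1 - ((q + 1 : ℕ) : ℝ)) * t * deriv P t
        + ρ * (ρ - 2 + ((q + 1 : ℕ) : ℝ)) * P t = 0 := by
  intro t ht
  classical
  have ht0 : (0:ℝ) < t := by linarith
  -- differentiability of P and deriv P on Ioi 1
  have hP2 : ContDiffOn ℝ 2 P (Set.Ioi 1) := hP.mono Set.Ioi_subset_Ici_self
  have hPd : ∀ u : ℝ, 1 < u → HasDerivAt P (deriv P u) u := fun u hu =>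
    ((hP2.differentiableOn (by norm_num)).differentiableAt (isOpen_Ioi.mem_nhds hu)).hasDerivAt
  have hP2' : ContDiffOn ℝ 1 (deriv P) (Set.Ioi 1) :=
    hP2.deriv_of_isOpen isOpen_Ioi (by norm_num)
  have hPdd : ∀ u : ℝ, 1 < u → HasDerivAt (deriv P) (deriv (deriv P) u) u := fun u hu =>
    ((hP2'.differentiableOn one_ne_zero).differentiableAt (isOpen_Ioi.mem_nhds hu)).hasDerivAt
  -- the open set U
  set U : Set (Fin (q+1) → ℝ) :=
    ((Qf q) ⁻¹' Set.Ioi 0 ∩ (Wf q) ⁻¹' Set.Ioi 1) ∩ (fun y => y 0) ⁻¹' Set.Ioi 0 with hUdef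
  have hUopen : IsOpen U := by
    refine IsOpen.inter ?_ (isOpen_Ioi.preimage (continuous_apply 0))
    refine ContinuousOn.isOpen_inter_preimage ?_
      (isOpen_Ioi.preimage continuous_Qf) isOpen_Ioi
    exact (continuous_apply 0).continuousOn.mul
      ((continuous_Qf.continuousOn).rpow_const fun y hy => Or.inl (ne_of_gt hy))
  -- f agrees with Ff on U
  have hfF : ∀ y ∈ U, f y = Ff q ρ P y := by
    rintro y ⟨⟨hQ, -⟩, hy0⟩
    have hQpos : (0:ℝ) < Qf q y := hQ
    have hy0' : (0:ℝ) < y 0 := hy0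
    set r : ℝ := Real.sqrt (Qf q y) with hrdef
    have hr : 0 < r := Real.sqrt_pos.2 hQpos
    have hsr : r = Qf q y ^ ((1:ℝ)/2) := by rw [hrdef, Real.sqrt_eq_rpow]
    set z : Fin (q+1) → ℝ := r⁻¹ • y with hzdef
    have hz : qdot 1 z z = 1 := by
      have h1 : qdot 1 z z = r⁻¹ * r⁻¹ * qdot 1 y y := by
        rw [qdot, qdot, Finset.mul_sum]
        refine Finset.sum_congr rfl fun i _ => ?_
        simp [hzdef]
        ring
      rw [h1]
      have h2 : qdot 1 y y = Qf q y := rfl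
      rw [h2]
      have hrr : r * r = Qf q y := Real.mul_self_sqrt hQpos.le
      field_simp
      linarith [hrr]
    have hz0 : 0 < z 0 := by
      have : z 0 = r⁻¹ * y 0 := rfl
      rw [this]
      positivity
    have hyz : r • z = y := smul_inv_smul₀ (ne_of_gt hr) y
    have h2 : f y = r ^ ρ * P (r⁻¹ * y 0) := by
      calc f y = f (r • z) := by rw [hyz]
        _ = r ^ ρ * f z := hhom z (by rw [hz]; norm_num) r hr
        _ = r ^ ρ * P (z 0) := by rw [hPf z hz hz0]
        _ = r ^ ρ * P (r⁻¹ * y 0) := rfl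
    have hrpow : r ^ ρ = Qf q y ^ (ρ/2) := by
      rw [hsr, ← Real.rpow_mul hQpos.le]
      congr 1
      ring
    have hinv : r⁻¹ = Qf q y ^ (-(1:ℝ)/2) := by
      rw [show (-(1:ℝ)/2) = -((1:ℝ)/2) by norm_num, Real.rpow_neg hQpos.le, hsr]
    rw [h2, hrpow, hinv]
    show _ = Qf q y ^ (ρ/2) * P (Wf q y)
    rw [Wf, mul_comm (y 0)]
  -- the point x
  set s1 : ℝ := Real.sqrt (t^2 - 1) with hs1def
  have hs1 : s1 ^ 2 = t^2 - 1 := Real.sq_sqrt (by nlinarith)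
  set x : Fin (q+1) → ℝ :=
    fun j => if (j:ℕ) = 0 then t else if (j:ℕ) = 1 then s1 else 0 with hxdef
  set i1 : Fin (q+1) := ⟨1, by omega⟩ with hi1def
  have hx0 : x 0 = t := by simp [hxdef]
  have hxi1 : x i1 = s1 := by simp [hxdef, hi1def]
  have hi1ne : i1 ≠ 0 := by
    simp [hi1def, Fin.ext_iff]
  have hQx : Qf q x = 1 := by
    have hterm : ∀ i : Fin (q+1), eps 1 i * x i * x i =
        (if i = 0 then t^2 else 0) + (if i = i1 then -(t^2-1) else 0) := by
      intro i
      by_cases h0 : (i : ℕ) = 0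
      · have hi : i = 0 := by
          apply Fin.ext
          simpa using h0
        subst hi
        simp [eps, hxdef, (Ne.symm hi1ne)]
        try ring
      · by_cases h1 : (i : ℕ) = 1
        · have hi : i = i1 := by
            apply Fin.ext
            simpa [hi1def] using h1
          subst hi
          have : ¬ ((i1 : ℕ) < 1) := by simp [hi1def]
          simp [eps, this, hxi1, hi1ne]
          linear_combination -hs1
        · have hx_i : x i = 0 := by simp only [hxdef, h0, h1, if_false]
          have hine0 : i ≠ 0 := fun h => h0 (by simp [h])
          have hinei1 : i ≠ i1 := fun h => h1 (by simp [h, hi1def])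
          simp [hx_i, hine0, hinei1]
    rw [Qf, Finset.sum_congr rfl fun i _ => hterm i]
    rw [Finset.sum_add_distrib]
    simp [Finset.sum_ite_eq']
    try ring
  have hWx : Wf q x = t := by
    rw [Wf, hQx, Real.one_rpow, hx0, mul_one]
  have hxU : x ∈ U := by
    refine ⟨⟨?_, ?_⟩, ?_⟩
    · show (0:ℝ) < Qf q x
      rw [hQx]; norm_num
    · show (1:ℝ) < Wf q x
      rw [hWx]; exact ht
    · show (0:ℝ) < x 0
      rw [hx0]; exact ht0
  -- fderiv of f on U
  have hfd : ∀ y ∈ U, fderiv ℝ f y = DF q ρ P y := by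
    intro y hy
    have hy' := hy
    obtain ⟨⟨hQ, hW⟩, -⟩ := hy'
    have hev : f =ᶠ[nhds y] Ff q ρ P := by
      filter_upwards [hUopen.mem_nhds hy] with z hz using hfF z hz
    rw [hev.fderiv_eq]
    exact (hasFDerivAt_Ff ρ P y (ne_of_gt hQ) (hPd _ hW)).fderiv
  -- derivative data at x
  have hQne : Qf q x ≠ 0 := by rw [hQx]; norm_num
  have hQd := hasFDerivAt_Qf (q := q) x
  have hWd := hasFDerivAt_Wf x hQne
  have hp1 : HasDerivAt P (deriv P (Wf q x)) (Wf q x) := by rw [hWx]; exact hPd t ht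
  have hp2 : HasDerivAt (deriv P) (deriv (deriv P) (Wf q x)) (Wf q x) := by
    rw [hWx]; exact hPdd t ht
  have hrρ : HasDerivAt (fun s : ℝ => s ^ (ρ/2)) ((ρ/2) * Qf q x ^ (ρ/2 - 1)) (Qf q x) :=
    Real.hasDerivAt_rpow_const (Or.inl hQne)
  have hrm : HasDerivAt (fun s : ℝ => s ^ (-(1:ℝ)/2))
      ((-(1:ℝ)/2) * Qf q x ^ (-(1:ℝ)/2 - 1)) (Qf q x) :=
    Real.hasDerivAt_rpow_const (Or.inl hQne)
  have hrm2 : HasDerivAt (fun s : ℝ => s ^ (-(1:ℝ)/2 - 1))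
      ((-(1:ℝ)/2 - 1) * Qf q x ^ (-(1:ℝ)/2 - 1 - 1)) (Qf q x) :=
    Real.hasDerivAt_rpow_const (Or.inl hQne)
  have hrρ2 : HasDerivAt (fun s : ℝ => s ^ (ρ/2 - 1))
      ((ρ/2 - 1) * Qf q x ^ (ρ/2 - 1 - 1)) (Qf q x) :=
    Real.hasDerivAt_rpow_const (Or.inl hQne)
  have hRQ := hrρ.comp_hasFDerivAt x hQd
  have hCQ := hrm.comp_hasFDerivAt x hQd
  have hp1W := hp1.comp_hasFDerivAt x hWd
  have hp2W := hp2.comp_hasFDerivAt x hWd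
  have hA := (hRQ.mul hp2W).mul hCQ
  have hg1 := ((ContinuousLinearMap.proj (R := ℝ) (φ := fun _ : Fin (q+1) => ℝ) 0).hasFDerivAt
    (x := x)).mul ((hrm2.comp_hasFDerivAt x hQd).const_mul (-(1:ℝ)/2))
  have hh := (hrρ2.comp_hasFDerivAt x hQd).const_mul (ρ/2)
  have hB := ((hRQ.mul hp2W).mul hg1).add (hp1W.mul hh)
  -- the key per-coordinate identity
  have key : ∀ i : Fin (q+1),
      eps 1 i * fderiv ℝ (fun y => fderiv ℝ f y (Pi.single i 1)) x (Pi.single i 1) =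
      (ρ * P t - t * deriv P t)
        + (if i = 0 then
            deriv (deriv P) t + 2*t*(ρ-1)*deriv P t - 2*t^2*deriv (deriv P) t
              + t^4*deriv (deriv P) t - (2*ρ-3)*t^3*deriv P t + ρ*(ρ-2)*t^2*P t
           else 0)
        + (if i = i1 then
            -(t^2-1)*(t^2*deriv (deriv P) t - (2*ρ-3)*t*deriv P t + ρ*(ρ-2)*P t)
           else 0) := by
    intro i
    have hlin := ((ContinuousLinearMap.proj (R := ℝ) (φ := fun _ : Fin (q+1) => ℝ) i).hasFDerivAt
      (x := x)).const_mul (2 * eps 1 i)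
    have hgd := (hA.mul_const ((Pi.single i 1 : Fin (q+1) → ℝ) 0)).add (hB.mul hlin)
    have hev2 : (fun y => fderiv ℝ f y (Pi.single i 1)) =ᶠ[nhds x]
        (fun y => Af q ρ P y * (Pi.single i 1 : Fin (q+1) → ℝ) 0
          + Bf q ρ P y * (2 * eps 1 i * y i)) := by
      filter_upwards [hUopen.mem_nhds hxU] with z hz
      rw [hfd z hz, DF_single]
    have hgd' : HasFDerivAt (fun y => Af q ρ P y * (Pi.single i 1 : Fin (q+1) → ℝ) 0
          + Bf q ρ P y * (2 * eps 1 i * y i)) _ x := hgd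
    have hfd2 := hgd'.congr_of_eventuallyEq hev2
    rw [hfd2.fderiv]
    simp only [ContinuousLinearMap.add_apply, ContinuousLinearMap.smul_apply,
      ContinuousLinearMap.coe_smul', Pi.smul_apply, ContinuousLinearMap.proj_apply,
      smul_eq_mul, Function.comp_apply, DQ_single, DW_single, Af, Bf, Pi.single_eq_same,
      Pi.mul_apply, Pi.add_apply]
    have heps0 : eps 1 (0 : Fin (q+1)) = 1 := by simp [eps]
    by_cases h0 : i = 0
    · subst h0
      rw [if_pos rfl, if_neg (Ne.symm hi1ne)]
      simp only [hQx, hWx, hx0, Real.one_rpow, heps0, Pi.single_eq_same]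
      ring
    · by_cases h1 : i = i1
      · subst h1
        rw [if_neg h0, if_pos rfl]
        have hsing : (Pi.single i1 1 : Fin (q+1) → ℝ) 0 = 0 :=
          Pi.single_eq_of_ne (Ne.symm hi1ne) 1
        have heps : eps 1 i1 = -1 := by
          simp [eps, hi1def]
        simp only [hQx, hWx, hx0, hxi1, Real.one_rpow, heps, hsing]
        ring_nf
        rw [hs1]
        ring
      · rw [if_neg h0, if_neg h1]
        have h0' : (i : ℕ) ≠ 0 := fun h => h0 (Fin.ext (by simpa using h))
        have h1' : (i : ℕ) ≠ 1 := fun h => h1 (Fin.ext (by simp [h, hi1def]))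
        have hsing : (Pi.single i 1 : Fin (q+1) → ℝ) 0 = 0 :=
          Pi.single_eq_of_ne (fun h => h0 h.symm) 1
        have hx_i : x i = 0 := by simp only [hxdef, h0', h1', if_false]
        have heps : eps 1 i = -1 := by
          simp [eps, Nat.lt_one_iff, h0']
        simp only [hQx, hWx, hx0, Real.one_rpow, heps, hsing, hx_i]
        ring
  -- sum up
  have hlap := hharm x (show 0 < qdot 1 x x by
    rw [show qdot 1 x x = Qf q x from rfl, hQx]; norm_num)
  simp only [lapR] at hlap
  rw [Finset.sum_congr rfl fun i _ => key i] at hlap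
  rw [Finset.sum_add_distrib, Finset.sum_add_distrib] at hlap
  simp only [Finset.sum_const, Finset.card_univ, Fintype.card_fin, nsmul_eq_mul,
    Finset.sum_ite_eq', Finset.mem_univ, if_true] at hlap
  push_cast at hlap ⊢
  linear_combination hlap
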